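/- Let 0 ≤ m₀ ≤ m₁ be real numbers and let k ≥ 1 be a natural number. Define the Poisson-based probability of false alarm P₀ = ∑_{x=k}^∞ Poi(x;m₀) and the Poisson-based probability of detection P_d = ∑_{x=k}^∞ Poi(x;m₁). Suppose the vector-based test has the same probability of false alarm, Q₀ = P₀, and its probability of detection Q_d is determined by (1/2)·((1 − Q₀) + Q_d) = Q_c, where Q_c = (1/2)·(1 + √(1 − e^{−(m₁−m₀)})). Then Q_d ≥ P_d. -/

import Mathlib

/-- Poisson probability mass function with mean `m` evaluated at `x`
(with the convention `0 ^ 0 = 1`). -/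
noncomputable def poi (m : ℝ) (x : ℕ) : ℝ := Real.exp (-m) * m ^ x / (Nat.factorial x)

lemma poi_hasSum (m : ℝ) : HasSum (poi m) 1 := by
  have h : HasSum (fun n : ℕ => m ^ n / (Nat.factorial n)) (Real.exp m) := by
    rw [Real.exp_eq_exp_ℝ]
    exact NormedSpace.expSeries_div_hasSum_exp m
  have := h.mul_left (Real.exp (-m))
  simp only [← Real.exp_add, neg_add_cancel, Real.exp_zero] at this
  convert this using 2 with x
  case e'_3 => rfl
  unfold poi; ring

lemma poi_nonneg {m : ℝ} (hm : 0 ≤ m) (x : ℕ) : 0 ≤ poi m x := by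
  unfold poi; positivity

/-- Cauchy–Schwarz for tsums over ℕ. -/
lemma tsum_mul_le_sqrt (f g : ℕ → ℝ) (hf : ∀ x, 0 ≤ f x) (hg : ∀ x, 0 ≤ g x)
    {A B : ℝ} (hA : HasSum (fun x => f x ^ 2) A) (hB : HasSum (fun x => g x ^ 2) B) :
    ∑' x, f x * g x ≤ Real.sqrt (A * B) := by
  have hA0 : 0 ≤ A := hA.tsum_eq ▸ tsum_nonneg (fun x => sq_nonneg _)
  have hB0 : 0 ≤ B := hB.tsum_eq ▸ tsum_nonneg (fun x => sq_nonneg _)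
  have hsum : Summable (fun x => f x * g x) := by
    refine Summable.of_nonneg_of_le (fun x => mul_nonneg (hf x) (hg x))
      (fun x => ?_) ((hA.summable.add hB.summable).div_const 2)
    nlinarith [sq_nonneg (f x - g x)]
  refine Summable.tsum_le_of_sum_le hsum fun s => ?_
  rw [Real.le_sqrt (Finset.sum_nonneg fun x _ => mul_nonneg (hf x) (hg x))
    (mul_nonneg hA0 hB0)]
  calc (∑ i ∈ s, f i * g i) ^ 2 ≤ (∑ i ∈ s, f i ^ 2) * ∑ i ∈ s, g i ^ 2 :=
        Finset.sum_mul_sq_le_sq_mul_sq s f g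
    _ ≤ A * B := by
        have h1 := Summable.sum_le_tsum s (fun x _ => sq_nonneg (f x)) hA.summable
        have h2 := Summable.sum_le_tsum s (fun x _ => sq_nonneg (g x)) hB.summable
        rw [hA.tsum_eq] at h1; rw [hB.tsum_eq] at h2
        exact mul_le_mul h1 h2 (Finset.sum_nonneg fun x _ => sq_nonneg _) hA0

/-- If the vector-based test has the same probability of false alarm as the Poisson-based
test and its probability of detection is determined by the Helstrom probability of correct
decision, then its probability of detection is at least the Poisson-based one. -/
theorem vector_detection_ge_poisson (m₀ m₁ : ℝ) (hm₀ : 0 ≤ m₀) (hm : m₀ ≤ m₁)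
    (k : ℕ) (hk : 1 ≤ k) (Q₀ Qd : ℝ)
    (hQ₀ : Q₀ = ∑' x : ℕ, if k ≤ x then poi m₀ x else 0)
    (hQd : (1 / 2) * ((1 - Q₀) + Qd) =
      (1 / 2) * (1 + Real.sqrt (1 - Real.exp (-(m₁ - m₀))))) :
    Qd ≥ ∑' x : ℕ, if k ≤ x then poi m₁ x else 0 := by
  have hm₁ : 0 ≤ m₁ := hm₀.trans hm
  set p := poi m₀ with hpdef
  set q := poi m₁ with hqdef
  have hp : HasSum p 1 := poi_hasSum m₀
  have hq : HasSum q 1 := poi_hasSum m₁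
  have hp0 : ∀ x, 0 ≤ p x := poi_nonneg hm₀
  have hq0 : ∀ x, 0 ≤ q x := poi_nonneg hm₁
  set S := Real.sqrt (1 - Real.exp (-(m₁ - m₀))) with hSdef
  have hQdval : Qd = Q₀ + S := by linarith
  -- the geometric-mean (fidelity) sum
  set G := Real.exp (Real.sqrt (m₀ * m₁) - (m₀ + m₁) / 2) with hGdef
  have hmm : 0 ≤ m₀ * m₁ := mul_nonneg hm₀ hm₁
  have hG : HasSum (fun x => Real.sqrt (p x * q x)) G := by
    have h : HasSum (fun n : ℕ => Real.sqrt (m₀ * m₁) ^ n / (Nat.factorial n))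
        (Real.exp (Real.sqrt (m₀ * m₁))) := by
      rw [Real.exp_eq_exp_ℝ]
      exact NormedSpace.expSeries_div_hasSum_exp _
    have := h.mul_left (Real.exp (-(m₀ + m₁) / 2))
    rw [← Real.exp_add] at this
    have heq : -(m₀ + m₁) / 2 + Real.sqrt (m₀ * m₁)
        = Real.sqrt (m₀ * m₁) - (m₀ + m₁) / 2 := by ring
    rw [heq] at this
    convert this using 2 with x
    case e'_3 => rfl
    have hbase : 0 ≤ Real.exp (-(m₀ + m₁) / 2) * (Real.sqrt (m₀ * m₁) ^ x / (Nat.factorial x)) := by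
      positivity
    rw [show p x * q x
        = (Real.exp (-(m₀ + m₁) / 2) * (Real.sqrt (m₀ * m₁) ^ x / (Nat.factorial x))) ^ 2 from ?_,
      Real.sqrt_sq hbase]
    have h1 : (Real.sqrt (m₀ * m₁) ^ x) ^ 2 = (m₀ * m₁) ^ x := by
      rw [← pow_mul, mul_comm x 2, pow_mul, Real.sq_sqrt hmm]
    have h2 : Real.exp (-(m₀ + m₁) / 2) ^ 2 = Real.exp (-m₀) * Real.exp (-m₁) := by
      rw [← Real.exp_add, sq, ← Real.exp_add]; ring_nf
    simp only [hpdef, hqdef, poi]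
    rw [mul_pow, div_pow, h1, h2, mul_pow]
    ring
  have hG0 : 0 < G := Real.exp_pos _
  -- bound ∑ |q - p|
  set f := fun x => |Real.sqrt (q x) - Real.sqrt (p x)| with hfdef
  set g := fun x => Real.sqrt (q x) + Real.sqrt (p x) with hgdef
  have hfg : ∀ x, f x * g x = |q x - p x| := by
    intro x
    have : (Real.sqrt (q x) - Real.sqrt (p x)) * (Real.sqrt (q x) + Real.sqrt (p x))
        = q x - p x := by
      have := Real.sq_sqrt (hq0 x); have := Real.sq_sqrt (hp0 x); nlinarith
    show |Real.sqrt (q x) - Real.sqrt (p x)| * (Real.sqrt (q x) + Real.sqrt (p x)) = |q x - p x|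
    rw [← abs_of_nonneg (add_nonneg (Real.sqrt_nonneg _) (Real.sqrt_nonneg _)),
      ← abs_mul, this]
  have hsqrt_mul : ∀ x, Real.sqrt (q x) * Real.sqrt (p x) = Real.sqrt (p x * q x) := by
    intro x; rw [← Real.sqrt_mul (hq0 x), mul_comm]
  have hA : HasSum (fun x => f x ^ 2) (2 - 2 * G) := by
    have := (hq.add hp).sub (hG.mul_left 2)
    norm_num at this
    convert this using 2 with x
    case e'_3 => rfl
    show |Real.sqrt (q x) - Real.sqrt (p x)| ^ 2 = _
    rw [sq_abs]
    have := Real.sq_sqrt (hq0 x); have := Real.sq_sqrt (hp0 x)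
    have := hsqrt_mul x
    nlinarith
  have hB : HasSum (fun x => g x ^ 2) (2 + 2 * G) := by
    have := (hq.add hp).add (hG.mul_left 2)
    norm_num at this
    convert this using 2 with x
    show (Real.sqrt (q x) + Real.sqrt (p x)) ^ 2 = _
    have := Real.sq_sqrt (hq0 x); have := Real.sq_sqrt (hp0 x)
    have := hsqrt_mul x
    nlinarith
  have habs_sum : Summable (fun x => |q x - p x|) := (hq.summable.sub hp.summable).abs
  have hT : ∑' x, |q x - p x| ≤ 2 * Real.sqrt (1 - G ^ 2) := by
    have hCS := tsum_mul_le_sqrt f g (fun x => abs_nonneg _)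
      (fun x => add_nonneg (Real.sqrt_nonneg _) (Real.sqrt_nonneg _)) hA hB
    have hrw : ∑' x, f x * g x = ∑' x, |q x - p x| := tsum_congr hfg
    rw [hrw] at hCS
    refine hCS.trans (le_of_eq ?_)
    rw [show (2 - 2 * G) * (2 + 2 * G) = 4 * (1 - G ^ 2) by ring,
      Real.sqrt_mul (by norm_num : (0:ℝ) ≤ 4),
      show Real.sqrt 4 = 2 by
        rw [show (4:ℝ) = 2 ^ 2 by norm_num, Real.sqrt_sq (by norm_num)]]
  -- the difference of tail sums
  set Pd := ∑' x : ℕ, if k ≤ x then q x else 0 with hPd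
  set P₀ := ∑' x : ℕ, if k ≤ x then p x else 0 with hP0
  have hfq : Summable (fun x : ℕ => if k ≤ x then q x else 0) :=
    Summable.of_nonneg_of_le (fun x => by split <;> simp [hq0 x])
      (fun x => by split <;> simp [hq0 x]) hq.summable
  have hfp : Summable (fun x : ℕ => if k ≤ x then p x else 0) :=
    Summable.of_nonneg_of_le (fun x => by split <;> simp [hp0 x])
      (fun x => by split <;> simp [hp0 x]) hp.summable
  have hdiff : HasSum (fun x : ℕ => if k ≤ x then q x - p x else 0) (Pd - P₀) := by
    have := hfq.hasSum.sub hfp.hasSum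
    convert this using 2 with x
    case e'_3 => rfl
    split <;> simp
  have hzero : HasSum (fun x => q x - p x) 0 := by
    have := hq.sub hp; simpa using this
  have hhalf : HasSum (fun x => (|q x - p x| + (q x - p x)) / 2)
      ((∑' x, |q x - p x| + 0) / 2) := (habs_sum.hasSum.add hzero).div_const 2
  have hle : Pd - P₀ ≤ (∑' x, |q x - p x| + 0) / 2 := by
    refine hasSum_le (fun x => ?_) hdiff hhalf
    split
    · have := abs_nonneg (q x - p x); have := le_abs_self (q x - p x); linarith
    · have := abs_nonneg (q x - p x); have := neg_abs_le (q x - p x); linarith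
  have hGS : Real.sqrt (1 - G ^ 2) ≤ S := by
    apply Real.sqrt_le_sqrt
    have : Real.exp (-(m₁ - m₀)) ≤ G ^ 2 := by
      rw [hGdef, ← Real.exp_nat_mul]
      apply Real.exp_le_exp.mpr
      have hs : m₀ ≤ Real.sqrt (m₀ * m₁) := by
        have h := Real.sqrt_le_sqrt (mul_le_mul_of_nonneg_left hm hm₀)
        rwa [Real.sqrt_mul_self hm₀] at h
      push_cast
      nlinarith
    linarith
  have hfinal : Pd - P₀ ≤ S := by
    have h1 : (∑' x, |q x - p x| + 0) / 2 ≤ Real.sqrt (1 - G ^ 2) := by linarith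
    linarith [h1.trans hGS]
  rw [hQdval, hQ₀]
  rw [hPd] at hfinal
  simp only [hpdef] at hP0
  linarith [hfinal]
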